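/- For n = 9 and every k ≥ 1, the number of meaningful compositions satisfies the recurrence f(k+5) = f(k+4) + 4·f(k+3) − 3·f(k+2) − 3·f(k+1) + f(k). -/

import Mathlib

/-- The relation "to be in composition" on `{1,…,n}`: the composition
`∇_j ∘ ∇_i` is meaningful iff `j = i + 1` or `i + j = n + 1`. -/
def rho (n i j : ℕ) : Prop := j = i + 1 ∨ i + j = n + 1

instance (n i j : ℕ) : Decidable (rho n i j) := by unfold rho; infer_instance

/-- A `k`-tuple `(i₁,…,i_k) ∈ {1,…,n}^k` (encoded as `g : Fin k → Fin n`, where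
`i_t = (g (t-1) : ℕ) + 1`) is a meaningful composition iff every pair of
consecutive entries is related by `rho`. -/
def Meaningful (n k : ℕ) (g : Fin k → Fin n) : Prop :=
  ∀ t : Fin (k - 1),
    rho n (((g ⟨t, lt_of_lt_of_le t.2 (Nat.sub_le k 1)⟩ : Fin n) : ℕ) + 1)
          (((g ⟨(t : ℕ) + 1, Nat.add_lt_of_lt_sub t.2⟩ : Fin n) : ℕ) + 1)

instance (n k : ℕ) (g : Fin k → Fin n) : Decidable (Meaningful n k g) := by
  unfold Meaningful; infer_instance

/-- `numComp n k` is the number of meaningful compositions of order `k` on `ℝⁿ`. -/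
def numComp (n k : ℕ) : ℕ := Fintype.card {g : Fin k → Fin n // Meaningful n k g}

-- auxiliary
def rho9 (j i : Fin 9) : Prop := rho 9 ((j : ℕ) + 1) ((i : ℕ) + 1)

instance (j i : Fin 9) : Decidable (rho9 j i) := by unfold rho9; infer_instance

def u : ℕ → Fin 9 → ℕ
  | 0, _ => 1
  | (k+1), j => ∑ i : Fin 9, if rho9 j i then u k i else 0

lemma meaningful_succ_iff (m : ℕ) (g : Fin (m + 2) → Fin 9) :
    Meaningful 9 (m + 2) g ↔
      rho 9 ((g 0 : ℕ) + 1) ((g 1 : ℕ) + 1) ∧ Meaningful 9 (m + 1) (Fin.tail g) := by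
  constructor
  · intro h
    refine ⟨?_, ?_⟩
    · have h0 := h ⟨0, by omega⟩
      simpa only [Fin.mk_zero, Nat.zero_add, Fin.mk_one] using h0
    · intro t
      exact h ⟨(t : ℕ) + 1, by omega⟩
  · rintro ⟨h01, htail⟩ ⟨tv, htv⟩
    cases tv with
    | zero => simpa only [Fin.mk_zero, Nat.zero_add, Fin.mk_one] using h01
    | succ tv => exact htail ⟨tv, by omega⟩

def N (k : ℕ) (j : Fin 9) : ℕ :=
  Fintype.card {g : Fin (k + 1) → Fin 9 // Meaningful 9 (k + 1) g ∧ g 0 = j}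

lemma N_zero (j : Fin 9) : N 0 j = 1 := by
  rw [N, Fintype.card_eq_one_iff]
  refine ⟨⟨fun _ => j, fun t => t.elim0, rfl⟩, ?_⟩
  rintro ⟨g, hm, h0⟩
  apply Subtype.ext
  funext t
  show g t = j
  rw [Fin.fin_one_eq_zero t, h0]

lemma N_succ (m : ℕ) (j : Fin 9) :
    N (m + 1) j = ∑ i : Fin 9, if rho9 j i then N m i else 0 := by
  classical
  have h1 : N (m + 1) j =
      ∑ i : Fin 9,
        Fintype.card {g : Fin (m + 2) → Fin 9 //
          (Meaningful 9 (m + 2) g ∧ g 0 = j) ∧ g 1 = i} := by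
    rw [N]
    rw [← Fintype.card_congr
      (Equiv.sigmaFiberEquiv fun a : {g : Fin (m + 2) → Fin 9 //
        Meaningful 9 (m + 2) g ∧ g 0 = j} => a.1 1)]
    rw [Fintype.card_sigma]
    refine Finset.sum_congr rfl fun i _ => ?_
    exact Fintype.card_congr (Equiv.subtypeSubtypeEquivSubtypeInter
      (fun g : Fin (m + 2) → Fin 9 => Meaningful 9 (m + 2) g ∧ g 0 = j)
      (fun g => g 1 = i))
  rw [h1]
  refine Finset.sum_congr rfl fun i _ => ?_
  by_cases hrel : rho9 j i
  · simp only [hrel, if_true]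
    rw [N]
    apply Fintype.card_congr
    refine ⟨fun g => ⟨Fin.tail g.1, ?_, ?_⟩, fun h => ⟨Fin.cons j h.1, ?_, ?_⟩, ?_, ?_⟩
    · exact ((meaningful_succ_iff m g.1).mp g.2.1.1).2
    · show g.1 (Fin.succ 0) = i
      rw [Fin.succ_zero_eq_one]; exact g.2.2
    · refine ⟨(meaningful_succ_iff m _).mpr ⟨?_, ?_⟩, ?_⟩
      · rw [Fin.cons_zero, show (1 : Fin (m+2)) = Fin.succ 0 from (Fin.succ_zero_eq_one).symm,
          Fin.cons_succ, h.2.2]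
        exact hrel
      · rw [Fin.tail_cons]; exact h.2.1
      · exact Fin.cons_zero _ _
    · rw [show (1 : Fin (m+2)) = Fin.succ 0 from (Fin.succ_zero_eq_one).symm, Fin.cons_succ]
      exact h.2.2
    · rintro ⟨g, ⟨hm, h0⟩, h1⟩
      exact Subtype.ext (show Fin.cons j (Fin.tail g) = g by
        rw [← h0]; exact Fin.cons_self_tail g)
    · rintro ⟨h, hm, h0⟩
      apply Subtype.ext
      funext t
      simp [Fin.tail_cons]
  · simp only [hrel, if_false]
    rw [Fintype.card_eq_zero_iff]
    constructor
    rintro ⟨g, ⟨hm, h0⟩, h1⟩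
    apply hrel
    have := ((meaningful_succ_iff m g).mp hm).1
    rwa [h0, h1] at this

lemma N_eq_u (k : ℕ) (j : Fin 9) : N k j = u k j := by
  induction k generalizing j with
  | zero => rw [N_zero]; rfl
  | succ m ih =>
    rw [N_succ, u]
    exact Finset.sum_congr rfl fun i _ => by by_cases h : rho9 j i <;> simp [h, ih]

lemma numComp_eq (k : ℕ) : numComp 9 (k + 1) = ∑ j : Fin 9, N k j := by
  classical
  rw [numComp]
  rw [← Fintype.card_congr
    (Equiv.sigmaFiberEquiv fun a : {g : Fin (k + 1) → Fin 9 //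
      Meaningful 9 (k + 1) g} => a.1 0)]
  rw [Fintype.card_sigma]
  refine Finset.sum_congr rfl fun j _ => ?_
  exact Fintype.card_congr (Equiv.subtypeSubtypeEquivSubtypeInter
    (fun g : Fin (k + 1) → Fin 9 => Meaningful 9 (k + 1) g) (fun g => g 0 = j))

lemma u_rec (k : ℕ) : ∀ j : Fin 9,
    u (k + 5) j + 3 * u (k + 2) j + 3 * u (k + 1) j
      = u (k + 4) j + 4 * u (k + 3) j + u k j := by
  induction k with
  | zero => decide
  | succ k ih =>
    intro j
    have hu : ∀ (m : ℕ) (j : Fin 9),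
        u (m + 1) j = ∑ i : Fin 9, if rho9 j i then u m i else 0 := fun _ _ => rfl
    rw [show k + 1 + 5 = (k + 5) + 1 from rfl, show k + 1 + 4 = (k + 4) + 1 from rfl,
      show k + 1 + 3 = (k + 3) + 1 from rfl, show k + 1 + 2 = (k + 2) + 1 from rfl,
      hu (k + 5) j, hu (k + 4) j, hu (k + 3) j, hu (k + 2) j, hu (k + 1) j, hu k j,
      Finset.mul_sum, Finset.mul_sum, Finset.mul_sum,
      ← Finset.sum_add_distrib, ← Finset.sum_add_distrib,
      ← Finset.sum_add_distrib, ← Finset.sum_add_distrib]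
    refine Finset.sum_congr rfl fun i _ => ?_
    by_cases h : rho9 j i <;> simp [h]
    have := ih i; omega

theorem numComp_nine_recurrence (k : ℕ) (hk : 1 ≤ k) :
    (numComp 9 (k + 5) : ℤ) = numComp 9 (k + 4) + 4 * numComp 9 (k + 3) - 3 * numComp 9 (k + 2) - 3 * numComp 9 (k + 1) + numComp 9 k := by
  obtain ⟨m, rfl⟩ : ∃ m, k = m + 1 := ⟨k - 1, by omega⟩
  have hc : ∀ r : ℕ, numComp 9 (m + 1 + r) = ∑ j : Fin 9, u (m + r) j := by
    intro r
    rw [show m + 1 + r = (m + r) + 1 by omega, numComp_eq]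
    exact Finset.sum_congr rfl fun j _ => N_eq_u _ _
  have hs : (∑ j : Fin 9, u (m + 5) j) + 3 * (∑ j : Fin 9, u (m + 2) j)
      + 3 * (∑ j : Fin 9, u (m + 1) j)
      = (∑ j : Fin 9, u (m + 4) j) + 4 * (∑ j : Fin 9, u (m + 3) j)
      + (∑ j : Fin 9, u m j) := by
    rw [Finset.mul_sum, Finset.mul_sum, Finset.mul_sum,
      ← Finset.sum_add_distrib, ← Finset.sum_add_distrib,
      ← Finset.sum_add_distrib, ← Finset.sum_add_distrib]
    exact Finset.sum_congr rfl fun j _ => u_rec m j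
  have h5 := hc 5
  have h4 := hc 4
  have h3 := hc 3
  have h2 := hc 2
  have h1 := hc 1
  have h0 := hc 0
  rw [show m + 0 = m by omega] at h0
  rw [show m + 1 + 0 = m + 1 by omega] at h0
  omega
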